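/- Let k > 0 and R₀ ∈ (0, π/√k), and define R : ℝ → ℝ by R(t) = (2/√k)·arcsin(exp(−k·t/2)·sin(√k·R₀/2)). Then R(0) = R₀ and, for every t ≥ 0, R is differentiable at t with derivative R'(t) = −√k · tan(√k·R(t)/2). (This is the deterministic distance process of the synchronous coupling of Brownian motions on a surface of constant curvature k > 0: dR_t = −√k tan(√k R_t/2) dt.) -/

import Mathlib

/-- The deterministic distance process of the synchronous coupling on a
surface of constant curvature `k > 0`: `R(t) = (2/√k)·arcsin(e^{−kt/2} sin(√k R₀/2))`
satisfies `R(0) = R₀` and `R'(t) = −√k · tan(√k R(t)/2)` for all `t ≥ 0`. -/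
theorem synchronous_coupling_distance (k R₀ : ℝ) (hk : 0 < k)
    (hR₀ : R₀ ∈ Set.Ioo 0 (Real.pi / Real.sqrt k)) (R : ℝ → ℝ)
    (hR : ∀ t, R t =
      2 / Real.sqrt k * Real.arcsin (Real.exp (-(k * t) / 2) * Real.sin (Real.sqrt k * R₀ / 2))) :
    R 0 = R₀ ∧
      ∀ t ≥ (0 : ℝ), HasDerivAt R (-Real.sqrt k * Real.tan (Real.sqrt k * R t / 2)) t := by
  set s := Real.sqrt k with hs
  have hspos : 0 < s := Real.sqrt_pos.mpr hk
  have hsne : s ≠ 0 := ne_of_gt hspos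
  have hksq : s * s = k := Real.mul_self_sqrt hk.le
  obtain ⟨hR₀pos, hR₀lt⟩ := hR₀
  have hhalf : s * R₀ / 2 < Real.pi / 2 := by
    have : s * R₀ < Real.pi := by
      rw [lt_div_iff₀ hspos] at hR₀lt; linarith [hR₀lt]
    linarith
  have hhalfpos : 0 < s * R₀ / 2 := by positivity
  set a := Real.sin (s * R₀ / 2) with ha
  have hapos : 0 < a := Real.sin_pos_of_pos_of_lt_pi hhalfpos
    (by linarith [Real.pi_pos])
  have halt : a < 1 := by
    have := Real.strictMonoOn_sin (a := s * R₀ / 2) (b := Real.pi / 2)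
      ⟨by linarith, by linarith⟩ ⟨by linarith [Real.pi_pos], le_refl _⟩ hhalf
    simpa using this
  have hR0 : R 0 = R₀ := by
    rw [hR 0]
    simp only [mul_zero, neg_zero, zero_div, Real.exp_zero, one_mul]
    rw [ha, Real.arcsin_sin (by linarith [Real.pi_pos]) (by linarith)]
    field_simp
  refine ⟨hR0, fun t ht => ?_⟩
  set u := Real.exp (-(k * t) / 2) * a with hu
  have hupos : 0 < u := mul_pos (Real.exp_pos _) hapos
  have hult : u < 1 := by
    have hexple : Real.exp (-(k * t) / 2) ≤ 1 := by
      apply Real.exp_le_one_iff.mpr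
      have : 0 ≤ k * t := mul_nonneg hk.le ht
      linarith
    calc u ≤ 1 * a := by
            apply mul_le_mul_of_nonneg_right hexple hapos.le
      _ < 1 := by simpa using halt
  have hune1 : u ≠ 1 := ne_of_lt hult
  have hunem1 : u ≠ -1 := by linarith
  have hw : 0 < Real.sqrt (1 - u ^ 2) := by
    apply Real.sqrt_pos.mpr
    nlinarith
  -- derivative of inner function
  have hinner : HasDerivAt (fun t => Real.exp (-(k * t) / 2) * a)
      (-(k / 2) * Real.exp (-(k * t) / 2) * a) t := by
    have h1 : HasDerivAt (fun t : ℝ => -(k * t) / 2) (-(k / 2)) t := by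
      have h0 : HasDerivAt (fun t : ℝ => -(k / 2) * t) (-(k / 2)) t := by
        simpa using (hasDerivAt_id t).const_mul (-(k / 2))
      have hfe : (fun t : ℝ => -(k * t) / 2) = fun t : ℝ => -(k / 2) * t := by
        funext x; ring
      rw [hfe]; exact h0
    have h2 := (h1.exp).mul_const a
    exact h2.congr_deriv (by ring)
  have harcsin := (Real.hasDerivAt_arcsin hunem1 hune1).comp t hinner
  have hfull := harcsin.const_mul (2 / s)
  have heq : (fun y => 2 / s *
      (Real.arcsin ∘ fun t => Real.exp (-(k * t) / 2) * a) y) = R := by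
    funext x; rw [hR x]; simp [Function.comp]
  rw [heq] at hfull
  refine hfull.congr_deriv (Eq.symm ?_)
  have hst : s * R t / 2 = Real.arcsin u := by
    rw [hR t, ← hu]
    field_simp
  rw [hst, Real.tan_arcsin]
  rw [hu]
  field_simp
  linear_combination (-(Real.sqrt (1 - Real.exp (-(k * t / 2)) ^ 2 * a ^ 2))⁻¹) * hksq
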